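/- arXiv:1204.5658 — 2 statements merged into one kernel-verified Lean document; each statement's English description precedes it below -/
import Mathlib

section
/- Step (d) of the classification proof: let X be a type and let w be a polygon word over X in which every pair is discord and in which no two pairs are interleaved. Then w ∼ [] (w represents the sphere). -/
namespace Surface

/-- A signed word over `X`: the entry `(a, true)` represents the edge `a`, and
`(a, false)` represents its inverse `ā`. -/
abbrev Word (X : Type*) := List (X × Bool)

/-- The inverse of a signed word: reverse it and negate every `Bool`. -/
def wordInv {X : Type*} (w : Word X) : Word X :=
  (w.map fun p => (p.1, !p.2)).reverse

/-- The letter `a` occurs in the signed word `w`. -/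
def Occurs {X : Type*} (a : X) (w : Word X) : Prop :=
  ∃ s : Bool, (a, s) ∈ w

/-- A polygon word: every letter that occurs, occurs exactly twice (counting `(a,true)`
and `(a,false)` together). -/
def IsPolygon {X : Type*} [DecidableEq X] (w : Word X) : Prop :=
  ∀ a : X, Occurs a w → (w.map Prod.fst).count a = 2

/-- The smallest equivalence relation on signed words closed under cyclicity, inversion,
cancellation, the discord rule and the concord rule. -/
inductive WEquiv {X : Type*} : Word X → Word X → Prop
  | refl (w : Word X) : WEquiv w w
  | symm {w v : Word X} : WEquiv w v → WEquiv v w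
  | trans {w v u : Word X} : WEquiv w v → WEquiv v u → WEquiv w u
  /-- (1) cyclicity -/
  | cyc (α : Word X) (x : X × Bool) : WEquiv (α ++ [x]) ([x] ++ α)
  /-- (2) inversion -/
  | inv (w : Word X) : WEquiv w (wordInv w)
  /-- (3) cancellation -/
  | cancel (α : Word X) (a : X) (s : Bool) (hα : ¬ Occurs a α) :
      WEquiv (α ++ [(a, s), (a, !s)]) α
  /-- (4) discord rule -/
  | discord (α β β' : Word X) (a : X) (s : Bool)
      (hα : ¬ Occurs a α) (hβ : ¬ Occurs a β) (hβ' : ¬ Occurs a β') :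
      WEquiv (α ++ [(a, s)] ++ β ++ β' ++ [(a, !s)])
             (α ++ [(a, s)] ++ β' ++ β ++ [(a, !s)])
  /-- (5) concord rule -/
  | concord (α β : Word X) (a : X) (s : Bool)
      (hα : ¬ Occurs a α) (hβ : ¬ Occurs a β) :
      WEquiv (α ++ [(a, s)] ++ β ++ [(a, s)])
             (α ++ wordInv β ++ [(a, s), (a, s)])

/-- The word `a₁a₁a₂a₂⋯aₖaₖ`, representing the connected sum of `k` projective planes. -/
def PWord {X : Type*} {k : ℕ} (a : Fin k → X) : Word X :=
  (List.ofFn fun i => [(a i, true), (a i, true)]).flatten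

/-- The word `a₁b₁ā₁b̄₁⋯aₙbₙāₙb̄ₙ`, representing the connected sum of `n` tori. -/
def TWord {X : Type*} {n : ℕ} (a b : Fin n → X) : Word X :=
  (List.ofFn fun i => [(a i, true), (b i, true), (a i, false), (b i, false)]).flatten

/-- `w` contains a concord pair: some letter occurs twice with the same sign. -/
def HasConcordPair {X : Type*} (w : Word X) : Prop :=
  ∃ (a : X) (s : Bool) (α β γ : Word X),
    w = α ++ [(a, s)] ++ β ++ [(a, s)] ++ γ

/-- `w` contains two interleaved pairs: letters `a ≠ b` occurring in the pattern
`⋯a⋯b⋯a⋯b⋯`. -/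
def HasInterleaved {X : Type*} (w : Word X) : Prop :=
  ∃ (a b : X) (s s' t t' : Bool) (α β γ δ ε : Word X), a ≠ b ∧
    w = α ++ [(a, s)] ++ β ++ [(b, t)] ++ γ ++ [(a, s')] ++ δ ++ [(b, t')] ++ ε

open List

lemma occurs_iff {X : Type*} (a : X) (w : Word X) : Occurs a w ↔ a ∈ w.map Prod.fst := by
  constructor
  · rintro ⟨s, h⟩
    exact List.mem_map.mpr ⟨(a, s), h, rfl⟩
  · intro h
    obtain ⟨p, hp, he⟩ := List.mem_map.mp h
    exact ⟨p.2, by cases p; cases he; exact hp⟩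

lemma rot {X : Type*} : ∀ (u v : Word X), WEquiv (u ++ v) (v ++ u)
  | [], v => by simpa using WEquiv.refl v
  | x :: u, v => by
    have h1 : WEquiv ([x] ++ (u ++ v)) ((u ++ v) ++ [x]) := (WEquiv.cyc _ x).symm
    have h2 : WEquiv (u ++ (v ++ [x])) ((v ++ [x]) ++ u) := rot u (v ++ [x])
    have e1 : (x :: u) ++ v = [x] ++ (u ++ v) := by simp
    have e2 : (u ++ v) ++ [x] = u ++ (v ++ [x]) := by simp
    have e3 : (v ++ [x]) ++ u = v ++ (x :: u) := by simp
    rw [e1]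
    exact h1.trans (e2 ▸ e3 ▸ h2)

lemma cons_sublist_split {X : Type*} {x : X × Bool} {l w : Word X} (h : (x :: l) <+ w) :
    ∃ p q, w = p ++ x :: q ∧ l <+ q := by
  induction w with
  | nil => simp at h
  | cons y w ih =>
    cases h with
    | cons _ h =>
      obtain ⟨p, q, rfl, hl⟩ := ih h
      exact ⟨y :: p, q, rfl, hl⟩
    | cons_cons _ h => exact ⟨[], w, rfl, h⟩

lemma hasConcord_of_sublist {X : Type*} {w : Word X} {a : X} {s : Bool}
    (h : [(a, s), (a, s)] <+ w) : HasConcordPair w := by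
  obtain ⟨α, q, rfl, h1⟩ := cons_sublist_split h
  obtain ⟨β, γ, rfl, _⟩ := cons_sublist_split h1
  exact ⟨a, s, α, β, γ, by simp⟩

lemma hasInterleaved_of_sublist {X : Type*} {w : Word X} {a b : X} {s t s' t' : Bool}
    (hab : a ≠ b) (h : [(a, s), (b, t), (a, s'), (b, t')] <+ w) : HasInterleaved w := by
  obtain ⟨α, q1, rfl, h1⟩ := cons_sublist_split h
  obtain ⟨β, q2, rfl, h2⟩ := cons_sublist_split h1
  obtain ⟨γ, q3, rfl, h3⟩ := cons_sublist_split h2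
  obtain ⟨δ, ε, rfl, _⟩ := cons_sublist_split h3
  exact ⟨a, b, s, s', t, t', α, β, γ, δ, ε, hab, by simp⟩

lemma sublist_middle {X : Type*} (x : X × Bool) (u v : Word X) : [x] <+ u ++ [x] ++ v :=
  (List.sublist_append_right u [x]).trans (List.sublist_append_left (u ++ [x]) v)

lemma concord_mono {X : Type*} {v w : Word X} (h : v <+ w) :
    HasConcordPair v → HasConcordPair w := by
  rintro ⟨a, s, α, β, γ, rfl⟩
  apply hasConcord_of_sublist (a := a) (s := s)
  refine List.Sublist.trans ?_ h
  have h1 : [(a, s)] <+ α ++ [(a, s)] := List.sublist_append_right α _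
  have h2 : [(a, s)] <+ β ++ [(a, s)] ++ γ := sublist_middle _ β γ
  have := List.Sublist.append h1 h2
  simpa [List.append_assoc] using this

lemma interleaved_mono {X : Type*} {v w : Word X} (h : v <+ w) :
    HasInterleaved v → HasInterleaved w := by
  rintro ⟨a, b, s, s', t, t', α, β, γ, δ, ε, hab, rfl⟩
  apply hasInterleaved_of_sublist hab (s := s) (t := t) (s' := s') (t' := t')
  refine List.Sublist.trans ?_ h
  have h1 : [(a, s)] <+ α ++ [(a, s)] := List.sublist_append_right α _
  have h2 : [(b, t)] <+ β ++ [(b, t)] := List.sublist_append_right β _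
  have h3 : [(a, s')] <+ γ ++ [(a, s')] := List.sublist_append_right γ _
  have h4 : [(b, t')] <+ δ ++ [(b, t')] ++ ε := sublist_middle _ δ ε
  have := ((h1.append h2).append h3).append h4
  simpa [List.append_assoc] using this

lemma first_occ {X : Type*} [DecidableEq X] {a : X} :
    ∀ {l : Word X}, a ∈ l.map Prod.fst →
      ∃ (β : Word X) (s : Bool) (γ : Word X), l = β ++ (a, s) :: γ ∧ a ∉ β.map Prod.fst := by
  intro l
  induction l with
  | nil => simp
  | cons x l ih =>
    intro h
    by_cases hx : x.1 = a
    · exact ⟨[], x.2, l, by cases x; simp_all, by simp⟩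
    · have h' : a ∈ l.map Prod.fst := by
        simp only [List.map_cons, List.mem_cons] at h
        tauto
      obtain ⟨β, s, γ, rfl, hβ⟩ := ih h'
      refine ⟨x :: β, s, γ, by simp, ?_⟩
      simp only [List.map_cons, List.mem_cons]
      rintro (h | h)
      · exact hx h.symm
      · exact hβ h

lemma exists_adjacent {X : Type*} [DecidableEq X] :
    ∀ (n : ℕ) (w : Word X), w.length ≤ n → IsPolygon w → ¬ HasInterleaved w → w ≠ [] →
      ∃ (α : Word X) (a : X) (s₁ s₂ : Bool) (γ : Word X),
        w = α ++ (a, s₁) :: (a, s₂) :: γ := by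
  intro n
  induction n with
  | zero =>
    intro w hlen _ _ hne
    exact absurd (List.eq_nil_of_length_eq_zero (Nat.le_zero.mp hlen)) hne
  | succ n ih =>
    rintro (_ | ⟨⟨a, s⟩, rest⟩) hlen hw hint hne
    · exact absurd rfl hne
    have hocc : Occurs a ((a, s) :: rest) := ⟨s, List.mem_cons_self⟩
    have hcount := hw a hocc
    simp only [List.map_cons, List.count_cons_self] at hcount
    have hmem : a ∈ rest.map Prod.fst := by
      rw [← List.count_pos_iff]
      omega
    obtain ⟨β, s', γ, rfl, hβ⟩ := first_occ hmem
    cases β with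
    | nil => exact ⟨[], a, s, s', γ, by simp⟩
    | cons y β' =>
      -- the inner word y :: β' is a nonempty polygon word without interleaving
      set B : Word X := y :: β' with hB
      have hBsub : B <+ (a, s) :: (B ++ (a, s') :: γ) :=
        (List.sublist_append_left B _).trans (List.sublist_cons_self _ _)
      have hBint : ¬ HasInterleaved B := fun h => hint (interleaved_mono hBsub h)
      have hBpoly : IsPolygon B := by
        intro c hc
        have hcmem : c ∈ B.map Prod.fst := (occurs_iff c B).mp hc
        have hca : c ≠ a := fun h => hβ (h ▸ hcmem)
        obtain ⟨u, hu⟩ := hc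
        have hcw : Occurs c ((a, s) :: (B ++ (a, s') :: γ)) :=
          ⟨u, List.mem_cons_of_mem _ (List.mem_append_left _ hu)⟩
        have h2 := hw c hcw
        simp only [List.map_cons, List.map_append] at h2
        rw [List.count_cons_of_ne hca.symm, List.count_append, List.count_cons_of_ne hca.symm] at h2
        have hγ : c ∉ γ.map Prod.fst := by
          intro hcγ
          obtain ⟨p, hp, hpe⟩ := List.mem_map.mp hcγ
          obtain ⟨u', hpu'⟩ : ∃ u', (c, u') ∈ γ := ⟨p.2, by cases p; cases hpe; exact hp⟩
          apply hint
          apply hasInterleaved_of_sublist (Ne.symm hca) (s := s) (t := u) (s' := s') (t' := u')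
          have g1 : [(c, u)] <+ B := List.singleton_sublist.mpr hu
          have g2 : [(c, u')] <+ γ := List.singleton_sublist.mpr hpu'
          have g3 : [(a, s'), (c, u')] <+ (a, s') :: γ := g2.cons₂ _
          have g4 : [(c, u), (a, s'), (c, u')] <+ B ++ (a, s') :: γ := g1.append g3
          exact g4.cons₂ _
        have hγ0 : (γ.map Prod.fst).count c = 0 := List.count_eq_zero.mpr hγ
        omega
      have hBlen : B.length ≤ n := by
        simp only [hB, List.length_cons, List.length_append] at hlen ⊢
        omega
      obtain ⟨α', b, t₁, t₂, γ', hsplit⟩ := ih B hBlen hBpoly hBint (by simp [hB])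
      refine ⟨(a, s) :: α', b, t₁, t₂, γ' ++ (a, s') :: γ, ?_⟩
      rw [hsplit]
      simp

lemma main_aux {X : Type*} [DecidableEq X] :
    ∀ (n : ℕ) (w : Word X), w.length ≤ n → IsPolygon w → ¬ HasConcordPair w →
      ¬ HasInterleaved w → WEquiv w [] := by
  intro n
  induction n with
  | zero =>
    intro w hlen _ _ _
    rw [List.eq_nil_of_length_eq_zero (Nat.le_zero.mp hlen)]
    exact WEquiv.refl []
  | succ n ih =>
    intro w hlen hw hcon hint
    by_cases hne : w = []
    · rw [hne]; exact WEquiv.refl []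
    obtain ⟨α, a, s₁, s₂, γ, rfl⟩ := exists_adjacent (n + 1) w hlen hw hint hne
    have hs : s₂ = !s₁ := by
      by_contra h
      have hs' : s₂ = s₁ := by cases s₁ <;> cases s₂ <;> simp_all
      subst hs'
      apply hcon
      apply hasConcord_of_sublist (a := a) (s := s₂)
      have g1 : [(a, s₂), (a, s₂)] <+ (a, s₂) :: (a, s₂) :: γ :=
        (((List.nil_sublist γ).cons₂ _).cons₂ _)
      calc [(a, s₂), (a, s₂)] <+ (a, s₂) :: (a, s₂) :: γ := g1
        _ <+ α ++ (a, s₂) :: (a, s₂) :: γ := List.sublist_append_right α _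
    subst hs
    have hocc : Occurs a (α ++ (a, s₁) :: (a, !s₁) :: γ) :=
      ⟨s₁, List.mem_append_right _ List.mem_cons_self⟩
    have hcount := hw a hocc
    simp only [List.map_append, List.map_cons, List.count_append, List.count_cons_self] at hcount
    have hαa : a ∉ α.map Prod.fst := by
      rw [← List.count_eq_zero]; omega
    have hγa : a ∉ γ.map Prod.fst := by
      rw [← List.count_eq_zero]; omega
    have hnocc : ¬ Occurs a (γ ++ α) := by
      rw [occurs_iff]
      simp only [List.map_append, List.mem_append]
      rintro (h | h)
      · exact hγa h
      · exact hαa h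
    -- equivalence chain
    have e0 : α ++ (a, s₁) :: (a, !s₁) :: γ = α ++ ([(a, s₁), (a, !s₁)] ++ γ) := by simp
    have q1 : WEquiv (α ++ ([(a, s₁), (a, !s₁)] ++ γ)) (([(a, s₁), (a, !s₁)] ++ γ) ++ α) :=
      rot α _
    have q2 : WEquiv ([(a, s₁), (a, !s₁)] ++ (γ ++ α)) ((γ ++ α) ++ [(a, s₁), (a, !s₁)]) :=
      rot _ _
    have q3 : WEquiv ((γ ++ α) ++ [(a, s₁), (a, !s₁)]) (γ ++ α) :=
      WEquiv.cancel (γ ++ α) a s₁ hnocc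
    have q4 : WEquiv (γ ++ α) (α ++ γ) := rot γ α
    have e1 : ([(a, s₁), (a, !s₁)] ++ γ) ++ α = [(a, s₁), (a, !s₁)] ++ (γ ++ α) := by simp
    have main : WEquiv (α ++ (a, s₁) :: (a, !s₁) :: γ) (α ++ γ) := by
      rw [e0]
      exact q1.trans (e1 ▸ (q2.trans (q3.trans q4)))
    -- hypotheses for α ++ γ
    have hsub : α ++ γ <+ α ++ (a, s₁) :: (a, !s₁) :: γ :=
      (List.Sublist.refl α).append
        ((List.sublist_cons_self _ _).trans (List.sublist_cons_self _ _))
    have hw' : IsPolygon (α ++ γ) := by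
      intro c hc
      have hcmem : c ∈ (α ++ γ).map Prod.fst := (occurs_iff c _).mp hc
      have hca : c ≠ a := by
        rintro rfl
        simp only [List.map_append, List.mem_append] at hcmem
        rcases hcmem with h | h
        · exact hαa h
        · exact hγa h
      obtain ⟨u, hu⟩ := hc
      have hcw : Occurs c (α ++ (a, s₁) :: (a, !s₁) :: γ) := by
        refine ⟨u, ?_⟩
        rcases List.mem_append.mp hu with h | h
        · exact List.mem_append_left _ h
        · exact List.mem_append_right _ (List.mem_cons_of_mem _ (List.mem_cons_of_mem _ h))
      have h2 := hw c hcw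
      simp only [List.map_append, List.map_cons, List.count_append] at h2 ⊢
      rw [List.count_cons_of_ne hca.symm, List.count_cons_of_ne hca.symm] at h2
      omega
    have hcon' : ¬ HasConcordPair (α ++ γ) := fun h => hcon (concord_mono hsub h)
    have hint' : ¬ HasInterleaved (α ++ γ) := fun h => hint (interleaved_mono hsub h)
    have hlen' : (α ++ γ).length ≤ n := by
      simp only [List.length_append, List.length_cons] at hlen ⊢
      omega
    exact main.trans (ih (α ++ γ) hlen' hw' hcon' hint')

/-- Step (d) of the classification proof: a polygon word with only discord pairs and
no two interleaved pairs is equivalent to the empty word (the sphere). -/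
theorem discord_noninterleaved_is_sphere {X : Type*} [DecidableEq X]
    (w : Word X) (hw : IsPolygon w)
    (hdis : ¬ HasConcordPair w) (hint : ¬ HasInterleaved w) :
    WEquiv w [] :=
  main_aux w.length w le_rfl hw hdis hint

end Surface
end

section
/- Example (v) in combinatorial form: let X be a type, n : ℕ, and let a₁, …, aₙ : X be pairwise distinct letters. Then the polygon word [(a₁,true),(a₂,true),…,(aₙ,true),(a₁,false),(a₂,false),…,(aₙ,false)] is ∼-equivalent to the connected sum of ⌊n/2⌋ tori: if n is even it is equivalent to [(a₁,true),(a₂,true),(a₁,false),(a₂,false),…,(aₙ₋₁,true),(aₙ,true),(aₙ₋₁,false),(aₙ,false)] reindexed over ⌊n/2⌋ disjoint pairs of distinct letters of X, and if n ≤ 1 it is equivalent to []. Precisely: there exist pairwise distinct letters c₁, d₁, …, c_m, d_m : X with m = ⌊n/2⌋ such that [(a₁,true),…,(aₙ,true),(a₁,false),…,(aₙ,false)] ∼ [(c₁,true),(d₁,true),(c₁,false),(d₁,false),…,(c_m,true),(d_m,true),(c_m,false),(d_m,false)]. -/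
namespace Surface

/- ===================== auxiliary lemmas ===================== -/

section Aux

variable {X : Type*}

lemma occurs_append {a : X} {u v : Word X} :
    Occurs a (u ++ v) ↔ Occurs a u ∨ Occurs a v := by
  simp [Occurs, List.mem_append, exists_or]

lemma not_occurs_append {a : X} {u v : Word X} :
    ¬ Occurs a (u ++ v) ↔ ¬ Occurs a u ∧ ¬ Occurs a v := by
  rw [occurs_append]; tauto

lemma not_occurs_nil {a : X} : ¬ Occurs a ([] : Word X) := by
  simp [Occurs]

lemma occurs_singleton {a b : X} {s : Bool} :
    Occurs a ([(b, s)] : Word X) ↔ a = b := by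
  simp [Occurs, Prod.ext_iff]

lemma occurs_tblock {z x y : X} :
    Occurs z ([(x, true), (y, true), (x, false), (y, false)] : Word X) ↔ z = x ∨ z = y := by
  simp [Occurs, Prod.ext_iff]

lemma occurs_ofFn {k : ℕ} {f : Fin k → X} {b : Bool} {z : X} :
    Occurs z (List.ofFn fun i => (f i, b)) ↔ ∃ i, f i = z := by
  simp [Occurs, List.mem_ofFn, Set.range, Prod.ext_iff, eq_comm]

lemma weq_of_eq {w v : Word X} (h : w = v) : WEquiv w v := h ▸ WEquiv.refl w

/-- Any rotation of a word is equivalent to it. -/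
lemma weq_rot (u : Word X) : ∀ v : Word X, WEquiv (u ++ v) (v ++ u) := by
  induction u with
  | nil => intro v; simpa using WEquiv.refl v
  | cons x u ih =>
      intro v
      have h1 : WEquiv ((u ++ v) ++ [x]) ([x] ++ (u ++ v)) := WEquiv.cyc _ _
      have h2 : WEquiv (u ++ (v ++ [x])) ((v ++ [x]) ++ u) := ih _
      refine WEquiv.trans (WEquiv.trans (weq_of_eq ?_) h1.symm)
        (WEquiv.trans (weq_of_eq ?_) (WEquiv.trans h2 (weq_of_eq ?_))) <;> simp

/-- Cancellation anywhere inside a word. -/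
lemma weq_cancel_mid (γ δ : Word X) (a : X) (s : Bool)
    (hγ : ¬ Occurs a γ) (hδ : ¬ Occurs a δ) :
    WEquiv (γ ++ [(a, s), (a, !s)] ++ δ) (γ ++ δ) := by
  have h1 : WEquiv (γ ++ [(a, s), (a, !s)] ++ δ) (δ ++ (γ ++ [(a, s), (a, !s)])) := by
    simpa [List.append_assoc] using weq_rot (γ ++ [(a, s), (a, !s)]) δ
  have h2 : WEquiv ((δ ++ γ) ++ [(a, s), (a, !s)]) (δ ++ γ) :=
    WEquiv.cancel (δ ++ γ) a s (not_occurs_append.2 ⟨hδ, hγ⟩)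
  have h3 : WEquiv (δ ++ γ) (γ ++ δ) := weq_rot δ γ
  exact h1.trans (((weq_of_eq (by simp)).trans h2).trans h3)

/-- The key word-combinatorial step: `A x y B x̄ ȳ v ∼ A B (x y x̄ ȳ) v`. -/
lemma step_core (A B v : Word X) (x y : X)
    (hxA : ¬ Occurs x A) (hxB : ¬ Occurs x B) (hxv : ¬ Occurs x v)
    (hyA : ¬ Occurs y A) (hyB : ¬ Occurs y B) (hyv : ¬ Occurs y v)
    (hxy : x ≠ y) :
    WEquiv (A ++ [(x,true),(y,true)] ++ B ++ [(x,false),(y,false)] ++ v)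
           (A ++ B ++ ([(x,true),(y,true),(x,false),(y,false)] ++ v)) := by
  have hyx : ¬ Occurs y [(x, false)] := by rw [occurs_singleton]; exact hxy.symm
  have hyxT : ¬ Occurs y [(x, true)] := by rw [occurs_singleton]; exact hxy.symm
  have hxyT : ¬ Occurs x [(y, true)] := by rw [occurs_singleton]; exact hxy
  have hxyF : ¬ Occurs x [(y, false)] := by rw [occurs_singleton]; exact hxy
  have h1 : WEquiv (A ++ [(x,true),(y,true)] ++ B ++ [(x,false),(y,false)] ++ v)
      ((v ++ A ++ [(x,true)]) ++ [(y,true)] ++ B ++ [(x,false)] ++ [(y,false)]) := by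
    simpa [List.append_assoc] using
      weq_rot (A ++ [(x,true),(y,true)] ++ B ++ [(x,false),(y,false)]) v
  have h2 : WEquiv ((v ++ A ++ [(x,true)]) ++ [(y,true)] ++ B ++ [(x,false)] ++ [(y,false)])
      ((v ++ A ++ [(x,true)]) ++ [(y,true)] ++ [(x,false)] ++ B ++ [(y,false)]) := by
    have := WEquiv.discord (v ++ A ++ [(x,true)]) B [(x,false)] y true
      (not_occurs_append.2 ⟨not_occurs_append.2 ⟨hyv, hyA⟩, hyxT⟩) hyB hyx
    simpa using this
  have h3 : WEquiv ((v ++ A ++ [(x,true)]) ++ [(y,true)] ++ [(x,false)] ++ B ++ [(y,false)])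
      ((A ++ [(x,true)]) ++ ([(y,true)] ++ [(x,false)] ++ B ++ [(y,false)] ++ v)) := by
    simpa [List.append_assoc] using
      weq_rot v (A ++ [(x,true)] ++ [(y,true)] ++ [(x,false)] ++ B ++ [(y,false)])
  have h4 : WEquiv ((A ++ [(x,true)]) ++ ([(y,true)] ++ [(x,false)] ++ B ++ [(y,false)] ++ v))
      ([(y,true)] ++ [(x,false)] ++ B ++ ([(y,false)] ++ v ++ A) ++ [(x,true)]) := by
    simpa [List.append_assoc] using
      weq_rot (A ++ [(x,true)]) ([(y,true)] ++ [(x,false)] ++ B ++ [(y,false)] ++ v)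
  have h5 : WEquiv ([(y,true)] ++ [(x,false)] ++ B ++ ([(y,false)] ++ v ++ A) ++ [(x,true)])
      ([(y,true)] ++ [(x,false)] ++ ([(y,false)] ++ v ++ A) ++ B ++ [(x,true)]) := by
    have := WEquiv.discord [(y,true)] B ([(y,false)] ++ v ++ A) x false
      hxyT hxB (not_occurs_append.2 ⟨not_occurs_append.2 ⟨hxyF, hxv⟩, hxA⟩)
    simpa using this
  have h6 : WEquiv ([(y,true)] ++ [(x,false)] ++ ([(y,false)] ++ v ++ A) ++ B ++ [(x,true)])
      (A ++ B ++ ([(x,true),(y,true),(x,false),(y,false)] ++ v)) := by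
    simpa [List.append_assoc] using
      weq_rot ([(y,true)] ++ [(x,false)] ++ [(y,false)] ++ v) (A ++ B ++ [(x,true)])
  exact ((((h1.trans h2).trans h3).trans h4).trans h5).trans h6

lemma tword_nil {k : ℕ} (h : k = 0) (c d : Fin k → X) : TWord c d = [] := by
  subst h; simp [TWord]

lemma tword_cast {k k' : ℕ} (e : k = k') (c d : Fin k' → X) :
    TWord (fun i : Fin k => c (Fin.cast e i)) (fun i : Fin k => d (Fin.cast e i))
      = TWord c d := by
  subst e; simp [Fin.cast_refl]

lemma tword_snoc {k : ℕ} (c' d' : Fin k → X) (x y : X) :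
    TWord (Fin.snoc c' x) (Fin.snoc d' y)
      = TWord c' d' ++ [(x,true),(y,true),(x,false),(y,false)] := by
  unfold TWord
  rw [List.ofFn_succ']
  simp [Fin.snoc_castSucc, Fin.snoc_last, List.concat_eq_append, List.flatten_append]

lemma snoc_inj {k : ℕ} {f : Fin k → X} {x : X} (hf : Function.Injective f)
    (hx : ∀ i, f i ≠ x) : Function.Injective (Fin.snoc f x : Fin (k+1) → X) := by
  intro i j h
  induction i using Fin.lastCases with
  | last =>
      induction j using Fin.lastCases with
      | last => rfl
      | cast j =>
          rw [Fin.snoc_last, Fin.snoc_castSucc] at h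
          exact absurd h.symm (hx j)
  | cast i =>
      induction j using Fin.lastCases with
      | last =>
          rw [Fin.snoc_last, Fin.snoc_castSucc] at h
          exact absurd h (hx i)
      | cast j =>
          rw [Fin.snoc_castSucc, Fin.snoc_castSucc] at h
          rw [hf h]

lemma sum_elim_inj_of {α β : Type*} {f : α → X} {g : β → X}
    (hf : Function.Injective f) (hg : Function.Injective g)
    (hfg : ∀ i j, f i ≠ g j) : Function.Injective (Sum.elim f g) := by
  rintro (i|i) (j|j) h <;> simp only [Sum.elim_inl, Sum.elim_inr] at h
  · exact congrArg _ (hf h)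
  · exact absurd h (hfg i j)
  · exact absurd h.symm (hfg j i)
  · exact congrArg _ (hg h)

/-- Main induction. -/
lemma key_lemma : ∀ (n : ℕ) (a : Fin n → X) (v : Word X), Function.Injective a →
    (∀ i, ¬ Occurs (a i) v) →
    ∃ c d : Fin (n / 2) → X,
      Function.Injective (Sum.elim c d) ∧
      (∀ i, ∃ j, c i = a j) ∧ (∀ i, ∃ j, d i = a j) ∧
      WEquiv ((List.ofFn fun i => (a i, true)) ++ ((List.ofFn fun i => (a i, false)) ++ v))
             (TWord c d ++ v) := by
  intro n
  induction n using Nat.twoStepInduction with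
  | zero =>
      intro a v ha hv
      have e : (0 : ℕ) / 2 = 0 := by omega
      refine ⟨fun i => (Fin.cast e i).elim0, fun i => (Fin.cast e i).elim0, ?_, ?_, ?_, ?_⟩
      · rintro (i|i) <;> exact (Fin.cast e i).elim0
      · intro i; exact (Fin.cast e i).elim0
      · intro i; exact (Fin.cast e i).elim0
      · rw [tword_nil e]
        simpa using WEquiv.refl v
  | one =>
      intro a v ha hv
      have e : (1 : ℕ) / 2 = 0 := by omega
      refine ⟨fun i => (Fin.cast e i).elim0, fun i => (Fin.cast e i).elim0, ?_, ?_, ?_, ?_⟩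
      · rintro (i|i) <;> exact (Fin.cast e i).elim0
      · intro i; exact (Fin.cast e i).elim0
      · intro i; exact (Fin.cast e i).elim0
      · rw [tword_nil e]
        have := weq_cancel_mid [] v (a 0) true not_occurs_nil (hv 0)
        simpa [List.ofFn_succ] using this
  | more n ih _ =>
      intro a v ha hv
      set x := a ((Fin.last n).castSucc) with hxdef
      set y := a (Fin.last (n+1)) with hydef
      set a' : Fin n → X := fun i => a i.castSucc.castSucc with ha'def
      set A : Word X := List.ofFn fun i => (a' i, true) with hAdef
      set B : Word X := List.ofFn fun i => (a' i, false) with hBdef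
      set Tb : Word X := [(x,true),(y,true),(x,false),(y,false)] with hTbdef
      have ha' : Function.Injective a' :=
        ha.comp ((Fin.castSucc_injective _).comp (Fin.castSucc_injective _))
      have hne1 : ∀ i : Fin n, a' i ≠ x := by
        intro i h
        have h2 := ha h
        have h3 : (i : ℕ) = n := by simpa [Fin.ext_iff] using h2
        omega
      have hne2 : ∀ i : Fin n, a' i ≠ y := by
        intro i h
        have h2 := ha h
        have h3 : (i : ℕ) = n + 1 := by simpa [Fin.ext_iff] using h2
        omega
      have hxy : x ≠ y := by
        intro h
        have h2 := ha h
        simp [Fin.ext_iff] at h2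
      -- decompositions of the two halves
      have hF : (List.ofFn fun i : Fin (n+2) => (a i, true)) = A ++ [(x,true),(y,true)] := by
        rw [List.ofFn_succ' (fun i : Fin (n+2) => (a i, true)), List.ofFn_succ']
        simp [hAdef, ha'def, hxdef, hydef, List.concat_eq_append, List.append_assoc]
      have hB : (List.ofFn fun i : Fin (n+2) => (a i, false)) = B ++ [(x,false),(y,false)] := by
        rw [List.ofFn_succ' (fun i : Fin (n+2) => (a i, false)), List.ofFn_succ']
        simp [hBdef, ha'def, hxdef, hydef, List.concat_eq_append, List.append_assoc]
      -- freshness facts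
      have hxA : ¬ Occurs x A := by rw [hAdef, occurs_ofFn]; push_neg; exact hne1
      have hxB : ¬ Occurs x B := by rw [hBdef, occurs_ofFn]; push_neg; exact hne1
      have hyA : ¬ Occurs y A := by rw [hAdef, occurs_ofFn]; push_neg; exact hne2
      have hyB : ¬ Occurs y B := by rw [hBdef, occurs_ofFn]; push_neg; exact hne2
      have hxv : ¬ Occurs x v := hv _
      have hyv : ¬ Occurs y v := hv _
      -- the inductive hypothesis, with suffix Tb ++ v
      have hv' : ∀ i, ¬ Occurs (a' i) (Tb ++ v) := by
        intro i
        rw [hTbdef, not_occurs_append, occurs_tblock]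
        exact ⟨by push_neg; exact ⟨hne1 i, hne2 i⟩, hv _⟩
      obtain ⟨c', d', hinj', hc'r, hd'r, hw'⟩ := ih a' (Tb ++ v) ha' hv'
      -- facts extracted from hinj'
      have hc'inj : Function.Injective c' := by
        intro i j h
        have := hinj' (a₁ := Sum.inl i) (a₂ := Sum.inl j) (by simpa using h)
        simpa using this
      have hd'inj : Function.Injective d' := by
        intro i j h
        have := hinj' (a₁ := Sum.inr i) (a₂ := Sum.inr j) (by simpa using h)
        simpa using this
      have hcd' : ∀ i j, c' i ≠ d' j := by
        intro i j h
        have := hinj' (a₁ := Sum.inl i) (a₂ := Sum.inr j) (by simpa using h)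
        simp at this
      have hc'x : ∀ i, c' i ≠ x := by
        intro i h
        obtain ⟨j, hj⟩ := hc'r i
        exact hne1 j (hj ▸ h)
      have hc'y : ∀ i, c' i ≠ y := by
        intro i h
        obtain ⟨j, hj⟩ := hc'r i
        exact hne2 j (hj ▸ h)
      have hd'x : ∀ i, d' i ≠ x := by
        intro i h
        obtain ⟨j, hj⟩ := hd'r i
        exact hne1 j (hj ▸ h)
      have hd'y : ∀ i, d' i ≠ y := by
        intro i h
        obtain ⟨j, hj⟩ := hd'r i
        exact hne2 j (hj ▸ h)
      -- build the new families
      have e : (n + 2) / 2 = n / 2 + 1 := by omega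
      refine ⟨fun i => (Fin.snoc c' x : Fin (n/2+1) → X) (Fin.cast e i),
        fun i => (Fin.snoc d' y : Fin (n/2+1) → X) (Fin.cast e i), ?_, ?_, ?_, ?_⟩
      · exact sum_elim_inj_of
          ((snoc_inj hc'inj hc'x).comp (Fin.cast_injective e))
          ((snoc_inj hd'inj hd'y).comp (Fin.cast_injective e))
          (by
            intro i j
            rcases Fin.eq_castSucc_or_eq_last (Fin.cast e i) with ⟨i', hi⟩ | hi <;>
              rcases Fin.eq_castSucc_or_eq_last (Fin.cast e j) with ⟨j', hj⟩ | hj <;>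
              simp only [hi, hj, Fin.snoc_castSucc, Fin.snoc_last]
            · exact hcd' i' j'
            · exact hc'y i'
            · exact fun h => hd'x j' h.symm
            · exact hxy)
      · intro i
        rcases Fin.eq_castSucc_or_eq_last (Fin.cast e i) with ⟨i', hi⟩ | hi <;>
          simp only [hi, Fin.snoc_castSucc, Fin.snoc_last]
        · obtain ⟨j, hj⟩ := hc'r i'
          exact ⟨j.castSucc.castSucc, hj⟩
        · exact ⟨(Fin.last n).castSucc, hxdef⟩
      · intro i
        rcases Fin.eq_castSucc_or_eq_last (Fin.cast e i) with ⟨i', hi⟩ | hi <;>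
          simp only [hi, Fin.snoc_castSucc, Fin.snoc_last]
        · obtain ⟨j, hj⟩ := hd'r i'
          exact ⟨j.castSucc.castSucc, hj⟩
        · exact ⟨Fin.last (n+1), hydef⟩
      · -- the word equivalence
        rw [hF, hB, tword_cast e (Fin.snoc c' x) (Fin.snoc d' y), tword_snoc]
        refine (weq_of_eq ?_).trans
          ((step_core A B v x y hxA hxB hxv hyA hyB hyv hxy).trans ?_)
        · simp [List.append_assoc]
        · refine (weq_of_eq ?_).trans (hw'.trans (weq_of_eq ?_)) <;>
            simp [List.append_assoc, hTbdef, hAdef, hBdef]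

end Aux

/-- Example (v) in combinatorial form: for pairwise distinct letters `a₁, …, aₙ`, the
polygon word `a₁⋯aₙā₁⋯āₙ` is equivalent to a connected sum of `⌊n/2⌋` tori. -/
theorem example_v_word {X : Type*} (n : ℕ) (a : Fin n → X) (ha : Function.Injective a) :
    ∃ c d : Fin (n / 2) → X, Function.Injective (Sum.elim c d) ∧
      WEquiv ((List.ofFn fun i => (a i, true)) ++ (List.ofFn fun i => (a i, false)))
             (TWord c d) := by
  obtain ⟨c, d, hinj, -, -, hw⟩ := key_lemma n a [] ha (fun i => not_occurs_nil)
  refine ⟨c, d, hinj, ?_⟩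
  refine (weq_of_eq ?_).trans (hw.trans (weq_of_eq ?_)) <;> simp

end Surface
end
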